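/- For the set S of nonnegative integer solutions (x_3, x_6, y) of the system y ≥ 4x_3 + 5x_6 + 3 and y ≤ 3x_3 + 6x_6 - 1, the characteristic series Σ_{(r_3,r_6,n)∈S} x_3^{r_3} x_6^{r_6} y^n equals x_6^4 y^{23} / ((1 - x_6 y^5)(1 - x_6 y^6)(1 - x_3 x_6 y^9)) as formal power series in Q[[x_3, x_6, y]]. -/

import Mathlib

open scoped Classical

/-- The characteristic series of a subset of `ℕ^k`. -/
noncomputable def charSeries (k : ℕ) (S : Set (Fin k → ℕ)) :
    MvPowerSeries (Fin k) ℚ :=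
  fun b => if (fun j => b j) ∈ S then 1 else 0

set_option maxHeartbeats 1600000 in
/-- The characteristic series of the solution set `S` of the transport system
is `x₆⁴ y²³ / ((1 - x₆y⁵)(1 - x₆y⁶)(1 - x₃x₆y⁹))`, as an identity in
`ℚ[[x₃, x₆, y]]` (variables indexed `0 ↦ x₃`, `1 ↦ x₆`, `2 ↦ y`). -/
theorem stmt_16 :
    charSeries 3 {x | 4 * ((x 0 : ℤ)) + 5 * (x 1) + 3 ≤ (x 2) ∧
        ((x 2 : ℤ)) ≤ 3 * (x 0) + 6 * (x 1) - 1} *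
      ((1 - MvPowerSeries.monomial (R := ℚ) (Finsupp.equivFunOnFinite.symm ![0, 1, 5]) 1) *
       (1 - MvPowerSeries.monomial (R := ℚ) (Finsupp.equivFunOnFinite.symm ![0, 1, 6]) 1) *
       (1 - MvPowerSeries.monomial (R := ℚ) (Finsupp.equivFunOnFinite.symm ![1, 1, 9]) 1))
    = MvPowerSeries.monomial (R := ℚ) (Finsupp.equivFunOnFinite.symm ![0, 4, 23]) 1 := by
  set f := charSeries 3 {x | 4 * ((x 0 : ℤ)) + 5 * (x 1) + 3 ≤ (x 2) ∧
        ((x 2 : ℤ)) ≤ 3 * (x 0) + 6 * (x 1) - 1} with hf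
  set d1 := Finsupp.equivFunOnFinite.symm ![0, 1, 5] with hd1
  set d2 := Finsupp.equivFunOnFinite.symm ![0, 1, 6] with hd2
  set d3 := Finsupp.equivFunOnFinite.symm ![1, 1, 9] with hd3
  have hm : ∀ a b : Fin 3 →₀ ℕ, (MvPowerSeries.monomial (R := ℚ) a 1) * (MvPowerSeries.monomial (R := ℚ) b 1)
      = MvPowerSeries.monomial (R := ℚ) (a + b) 1 := fun a b => by
    rw [MvPowerSeries.monomial_mul_monomial, one_mul]
  have expand : f *
      ((1 - MvPowerSeries.monomial (R := ℚ) d1 1) * (1 - MvPowerSeries.monomial (R := ℚ) d2 1) *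
        (1 - MvPowerSeries.monomial (R := ℚ) d3 1)) =
      f - f * MvPowerSeries.monomial (R := ℚ) d1 1 - f * MvPowerSeries.monomial (R := ℚ) d2 1
        - f * MvPowerSeries.monomial (R := ℚ) d3 1
        + f * (MvPowerSeries.monomial (R := ℚ) d1 1 * MvPowerSeries.monomial (R := ℚ) d2 1)
        + f * (MvPowerSeries.monomial (R := ℚ) d1 1 * MvPowerSeries.monomial (R := ℚ) d3 1)
        + f * (MvPowerSeries.monomial (R := ℚ) d2 1 * MvPowerSeries.monomial (R := ℚ) d3 1)
        - f * (MvPowerSeries.monomial (R := ℚ) d1 1 * MvPowerSeries.monomial (R := ℚ) d2 1 *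
            MvPowerSeries.monomial (R := ℚ) d3 1) := by ring
  rw [expand, hm d1 d2, hm d1 d3, hm d2 d3, hm (d1 + d2) d3]
  apply MvPowerSeries.ext
  intro e
  simp only [map_sub, map_add, MvPowerSeries.coeff_mul_monomial, MvPowerSeries.coeff_monomial]
  have hcoeff : ∀ b : Fin 3 →₀ ℕ, MvPowerSeries.coeff (R := ℚ) b f =
      if (4 * ((b 0 : ℤ)) + 5 * (b 1) + 3 ≤ (b 2) ∧
        ((b 2 : ℤ)) ≤ 3 * (b 0) + 6 * (b 1) - 1) then 1 else 0 := fun b => by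
    rw [MvPowerSeries.coeff_apply, hf, charSeries]
    simp only [Set.mem_setOf_eq]
  simp only [hcoeff, mul_one]
  have heq : (e = Finsupp.equivFunOnFinite.symm ![0, 4, 23]) ↔
      (e 0 = 0 ∧ e 1 = 4 ∧ e 2 = 23) := by
    rw [Finsupp.ext_iff]
    constructor
    · intro h; exact ⟨h 0, h 1, h 2⟩
    · rintro ⟨h0, h1, h2⟩ i
      fin_cases i <;> simpa [hd1]
  have hadd : ∀ (a b c a' b' c' : ℕ), Finsupp.equivFunOnFinite.symm ![a,b,c] +
      Finsupp.equivFunOnFinite.symm ![a',b',c'] =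
      Finsupp.equivFunOnFinite.symm ![a+a', b+b', c+c'] := by
    intro a b c a' b' c'
    ext i
    fin_cases i <;> rfl
  have hle : ∀ (a b c : ℕ), (Finsupp.equivFunOnFinite.symm ![a,b,c] ≤ e) ↔
      (a ≤ e 0 ∧ b ≤ e 1 ∧ c ≤ e 2) := by
    intro a b c
    rw [Finsupp.le_def]
    constructor
    · intro h; exact ⟨h 0, h 1, h 2⟩
    · rintro ⟨h0, h1, h2⟩ i
      fin_cases i <;> assumption
  have hsub : ∀ (a b c : ℕ) (i : Fin 3),
      (e - Finsupp.equivFunOnFinite.symm ![a,b,c]) i = e i - ![a,b,c] i := by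
    intro a b c i
    rw [Finsupp.tsub_apply]
    rfl
  rw [hd1, hd2, hd3] at *
  simp only [hadd] at *
  norm_num at *
  simp only [hle, hsub, heq]
  norm_num [Matrix.cons_val_zero, Matrix.cons_val_one]
  simp only [← ite_and]
  -- canonical forms: p := e 2 + 1 ≤ 6 * e 1 + 3 * e 0 (a ≥ 0),
  -- p' := e 2 + 2 ≤ 6 * e 1 + 3 * e 0 (a ≥ 1),
  -- q := 5 * e 1 + 4 * e 0 + 3 ≤ e 2 (b ≥ 0), q' := 5 * e 1 + 4 * e 0 + 4 ≤ e 2 (b ≥ 1),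
  -- r := 1 ≤ e 0
  have i8 : (4 * ((e 0 : ℕ) : ℤ) + 5 * ((e 1 : ℕ) : ℤ) + 3 ≤ ((e 2 : ℕ) : ℤ) ∧
      ((e 2 : ℕ) : ℤ) ≤ 3 * ((e 0 : ℕ) : ℤ) + 6 * ((e 1 : ℕ) : ℤ) - 1) ↔
      ((e 2 + 1 ≤ 6 * e 1 + 3 * e 0) ∧ (5 * e 1 + 4 * e 0 + 3 ≤ e 2)) := by omega
  have i7 : ((1 ≤ e 1 ∧ 5 ≤ e 2) ∧
      4 * ((e 0 : ℕ) : ℤ) + 5 * ((e 1 - 1 : ℕ) : ℤ) + 3 ≤ ((e 2 - 5 : ℕ) : ℤ) ∧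
      ((e 2 - 5 : ℕ) : ℤ) ≤ 3 * ((e 0 : ℕ) : ℤ) + 6 * ((e 1 - 1 : ℕ) : ℤ) - 1) ↔
      ((e 2 + 2 ≤ 6 * e 1 + 3 * e 0) ∧ (5 * e 1 + 4 * e 0 + 3 ≤ e 2)) := by omega
  have i6 : ((1 ≤ e 1 ∧ 6 ≤ e 2) ∧
      4 * ((e 0 : ℕ) : ℤ) + 5 * ((e 1 - 1 : ℕ) : ℤ) + 3 ≤ ((e 2 - 6 : ℕ) : ℤ) ∧
      ((e 2 - 6 : ℕ) : ℤ) ≤ 3 * ((e 0 : ℕ) : ℤ) + 6 * ((e 1 - 1 : ℕ) : ℤ) - 1) ↔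
      ((e 2 + 1 ≤ 6 * e 1 + 3 * e 0) ∧ (5 * e 1 + 4 * e 0 + 4 ≤ e 2)) := by omega
  have i5 : ((1 ≤ e 0 ∧ 1 ≤ e 1 ∧ 9 ≤ e 2) ∧
      4 * ((e 0 - 1 : ℕ) : ℤ) + 5 * ((e 1 - 1 : ℕ) : ℤ) + 3 ≤ ((e 2 - 9 : ℕ) : ℤ) ∧
      ((e 2 - 9 : ℕ) : ℤ) ≤ 3 * ((e 0 - 1 : ℕ) : ℤ) + 6 * ((e 1 - 1 : ℕ) : ℤ) - 1) ↔
      ((e 2 + 1 ≤ 6 * e 1 + 3 * e 0) ∧ (5 * e 1 + 4 * e 0 + 3 ≤ e 2) ∧ (1 ≤ e 0)) := by omega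
  have i4 : ((2 ≤ e 1 ∧ 11 ≤ e 2) ∧
      4 * ((e 0 : ℕ) : ℤ) + 5 * ((e 1 - 2 : ℕ) : ℤ) + 3 ≤ ((e 2 - 11 : ℕ) : ℤ) ∧
      ((e 2 - 11 : ℕ) : ℤ) ≤ 3 * ((e 0 : ℕ) : ℤ) + 6 * ((e 1 - 2 : ℕ) : ℤ) - 1) ↔
      ((e 2 + 2 ≤ 6 * e 1 + 3 * e 0) ∧ (5 * e 1 + 4 * e 0 + 4 ≤ e 2)) := by omega
  have i3 : ((1 ≤ e 0 ∧ 2 ≤ e 1 ∧ 14 ≤ e 2) ∧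
      4 * ((e 0 - 1 : ℕ) : ℤ) + 5 * ((e 1 - 2 : ℕ) : ℤ) + 3 ≤ ((e 2 - 14 : ℕ) : ℤ) ∧
      ((e 2 - 14 : ℕ) : ℤ) ≤ 3 * ((e 0 - 1 : ℕ) : ℤ) + 6 * ((e 1 - 2 : ℕ) : ℤ) - 1) ↔
      ((e 2 + 2 ≤ 6 * e 1 + 3 * e 0) ∧ (5 * e 1 + 4 * e 0 + 3 ≤ e 2) ∧ (1 ≤ e 0)) := by omega
  have i2 : ((1 ≤ e 0 ∧ 2 ≤ e 1 ∧ 15 ≤ e 2) ∧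
      4 * ((e 0 - 1 : ℕ) : ℤ) + 5 * ((e 1 - 2 : ℕ) : ℤ) + 3 ≤ ((e 2 - 15 : ℕ) : ℤ) ∧
      ((e 2 - 15 : ℕ) : ℤ) ≤ 3 * ((e 0 - 1 : ℕ) : ℤ) + 6 * ((e 1 - 2 : ℕ) : ℤ) - 1) ↔
      ((e 2 + 1 ≤ 6 * e 1 + 3 * e 0) ∧ (5 * e 1 + 4 * e 0 + 4 ≤ e 2) ∧ (1 ≤ e 0)) := by omega
  have i1 : ((1 ≤ e 0 ∧ 3 ≤ e 1 ∧ 20 ≤ e 2) ∧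
      4 * ((e 0 - 1 : ℕ) : ℤ) + 5 * ((e 1 - 3 : ℕ) : ℤ) + 3 ≤ ((e 2 - 20 : ℕ) : ℤ) ∧
      ((e 2 - 20 : ℕ) : ℤ) ≤ 3 * ((e 0 - 1 : ℕ) : ℤ) + 6 * ((e 1 - 3 : ℕ) : ℤ) - 1) ↔
      ((e 2 + 2 ≤ 6 * e 1 + 3 * e 0) ∧ (5 * e 1 + 4 * e 0 + 4 ≤ e 2) ∧ (1 ≤ e 0)) := by omega
  simp only [Matrix.cons_val_two, Matrix.tail_cons, Matrix.head_cons, ← Int.le_sub_one_iff]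
  simp only [i8, i7, i6, i5, i4, i3, i2, i1]
  simp only [ite_and]
  split_ifs <;> (try norm_num) <;> omega
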